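/- Classical irrepresentable condition implies the GLBI irrepresentable condition in sparse linear regression: Consider the loss ℓ(β) = ‖y − Xβ‖₂²/(2n) with no intercept, and assume λ·I ⪯ X_Sᵀ X_S ⪯ Λ·I for some λ, Λ > 0 and λ' := λ(1 − κδΛ/2) > 0. Then for every K ≥ 1 the oracle iteration satisfies ‖z'_{K,S}‖_∞ ≤ 1 + (√(Λ/λ) + 1)‖βᵒ_S‖₂/κ. Consequently, if ‖X_{S^c}ᵀ X_S (X_Sᵀ X_S)⁻¹‖_∞ ≤ 1 − η for some η ∈ (0,1) and κ is large enough that 1 + (√(Λ/λ) + 1)‖βᵒ_S‖₂/κ < (1 − η/2)/(1 − η), then sup_{K≥1} ‖X_{S^c}ᵀ X_S (X_Sᵀ X_S)⁻¹ z'_{K,S}‖_∞ < 1 − η/2. -/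

import Mathlib

open scoped BigOperators

/-- The soft-thresholding (shrinkage) operator `𝒮(·,1)`. -/
noncomputable def soft (x : ℝ) : ℝ := Real.sign x * max (|x| - 1) 0

noncomputable def clamp1 (x : ℝ) : ℝ := max (min x 1) (-1)

lemma soft_eq (x : ℝ) : soft x = x - clamp1 x := by
  unfold soft clamp1
  rcases lt_trichotomy x 0 with h | h | h
  · rw [Real.sign_of_neg h, abs_of_neg h, min_eq_left (by linarith : x ≤ 1)]
    rcases le_total x (-1) with h1 | h1
    · rw [max_eq_right h1, max_eq_left (by linarith : (0:ℝ) ≤ -x - 1)]; ring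
    · rw [max_eq_left h1, max_eq_right (by linarith : -x - 1 ≤ 0)]; ring
  · simp [h]
  · rw [Real.sign_of_pos h, abs_of_pos h]
    rcases le_total x 1 with h1 | h1
    · rw [min_eq_left h1, max_eq_left (by linarith : (-1:ℝ) ≤ x),
        max_eq_right (by linarith : x - 1 ≤ 0)]; ring
    · rw [min_eq_right h1, max_eq_left (by norm_num : (-1:ℝ) ≤ 1),
        max_eq_left (by linarith : (0:ℝ) ≤ x - 1)]; ring

lemma clamp1_le (x : ℝ) : clamp1 x ≤ 1 :=
  max_le (min_le_right _ _) (by norm_num)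

lemma neg_le_clamp1 (x : ℝ) : -1 ≤ clamp1 x := le_max_right _ _

lemma clamp1_mem (x : ℝ) (w : ℝ) (h1 : -1 ≤ w) (h2 : w ≤ 1) :
    (x - clamp1 x) * (w - clamp1 x) ≤ 0 := by
  unfold clamp1
  rcases le_total x (-1) with h | h
  · rw [max_eq_right (by rw [min_eq_left (by linarith)]; exact h)]
    nlinarith
  · rcases le_total x 1 with h' | h'
    · rw [max_eq_left (by rw [min_eq_left h']; exact h), min_eq_left h']
      simp
    · rw [max_eq_left (by rw [min_eq_right h']; norm_num), min_eq_right h']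
      nlinarith

lemma soft_firm (a b : ℝ) : (soft a - soft b) ^ 2 ≤ (soft a - soft b) * (a - b) := by
  have ha := clamp1_mem a (clamp1 b) (neg_le_clamp1 b) (clamp1_le b)
  have hb := clamp1_mem b (clamp1 a) (neg_le_clamp1 a) (clamp1_le a)
  rw [soft_eq, soft_eq]
  nlinarith

lemma soft_zero : soft 0 = 0 := by simp [soft]

lemma abs_sub_soft (x : ℝ) : |x - soft x| ≤ 1 := by
  rw [soft_eq, abs_le]
  constructor
  · simpa using neg_le_clamp1 x
  · simpa using clamp1_le x

set_option maxHeartbeats 1000000 in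
/-- **Classical irrepresentable condition implies the GLBI irrepresentable condition in
sparse linear regression.** For the loss `ℓ(β) = ‖y − Xβ‖₂²/(2n)` with
`λI ⪯ X_SᵀX_S ⪯ ΛI` and `λ' = λ(1 − κδΛ/2) > 0`, the oracle iteration satisfies
`‖z'_{K,S}‖_∞ ≤ 1 + (√(Λ/λ) + 1)‖βᵒ_S‖₂/κ` for every `K ≥ 1`; consequently, if
`‖X_{Sᶜ}ᵀX_S(X_SᵀX_S)⁻¹‖_∞ ≤ 1 − η` and `κ` is large enough that
`1 + (√(Λ/λ) + 1)‖βᵒ_S‖₂/κ < (1 − η/2)/(1 − η)`, then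
`sup_{K ≥ 1}‖X_{Sᶜ}ᵀX_S(X_SᵀX_S)⁻¹ z'_{K,S}‖_∞ < 1 − η/2`. -/
theorem linear_classical_irr_implies_glbi_irr
    {n p : ℕ} (X : Fin n → Fin p → ℝ) (y : Fin n → ℝ) (S : Finset (Fin p))
    (ℓ : (Fin p → ℝ) → ℝ)
    (hℓ : ℓ = fun β => (∑ i, (y i - ∑ j, X i j * β j) ^ 2) / (2 * n))
    (βo : Fin p → ℝ) (hβo_supp : ∀ j, j ∉ S → βo j = 0)
    (hβo_min : ∀ β : Fin p → ℝ, (∀ j, j ∉ S → β j = 0) → ℓ βo ≤ ℓ β)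
    (κ δ : ℝ) (hκ : 0 < κ) (hδ : 0 < δ)
    (lam Lam : ℝ) (hlam : 0 < lam) (hLam : 0 < Lam)
    (hlower : ∀ v : Fin p → ℝ, (∀ j, j ∉ S → v j = 0) →
      lam * ∑ j, v j ^ 2 ≤ ∑ i, (∑ j, X i j * v j) ^ 2)
    (hupper : ∀ v : Fin p → ℝ, (∀ j, j ∉ S → v j = 0) →
      ∑ i, (∑ j, X i j * v j) ^ 2 ≤ Lam * ∑ j, v j ^ 2)
    (hlam' : 0 < lam * (1 - κ * δ * Lam / 2))
    (β' z' : ℕ → Fin p → ℝ)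
    (hz'0 : ∀ j, z' 0 j = 0) (hβ'0 : ∀ j, β' 0 j = 0)
    (hsupp : ∀ k j, j ∉ S → z' k j = 0 ∧ β' k j = 0)
    (hz'step : ∀ k, ∀ j ∈ S,
      z' (k + 1) j = z' k j - δ * fderiv ℝ ℓ (β' k) (Pi.single j 1))
    (hβ'step : ∀ k, ∀ j ∈ S, β' (k + 1) j = κ * soft (z' (k + 1) j)) :
    (∀ K : ℕ, 1 ≤ K → ∀ j ∈ S,
        |z' K j| ≤ 1 + (Real.sqrt (Lam / lam) + 1) *
            Real.sqrt (∑ j ∈ S, βo j ^ 2) / κ) ∧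
      ∀ η : ℝ, 0 < η → η < 1 →
        (∀ jc : {j : Fin p // j ∉ S},
          ∑ l : {j : Fin p // j ∈ S},
            |((Matrix.of fun (a : {j : Fin p // j ∉ S}) (b : {j : Fin p // j ∈ S}) =>
                  ∑ i, X i a.1 * X i b.1) *
                (Matrix.of fun (a b : {j : Fin p // j ∈ S}) =>
                  ∑ i, X i a.1 * X i b.1)⁻¹) jc l| ≤ 1 - η) →
        1 + (Real.sqrt (Lam / lam) + 1) * Real.sqrt (∑ j ∈ S, βo j ^ 2) / κ
            < (1 - η / 2) / (1 - η) →
        ∃ b, b < 1 - η / 2 ∧ ∀ K : ℕ, 1 ≤ K → ∀ jc : {j : Fin p // j ∉ S},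
          |∑ l : {j : Fin p // j ∈ S},
              ((Matrix.of fun (a : {j : Fin p // j ∉ S}) (b : {j : Fin p // j ∈ S}) =>
                    ∑ i, X i a.1 * X i b.1) *
                  (Matrix.of fun (a b : {j : Fin p // j ∈ S}) =>
                    ∑ i, X i a.1 * X i b.1)⁻¹) jc l * z' K l.1| ≤ b := by
  have part1 : ∀ K : ℕ, 1 ≤ K → ∀ j ∈ S,
      |z' K j| ≤ 1 + (Real.sqrt (Lam / lam) + 1) *
          Real.sqrt (∑ j ∈ S, βo j ^ 2) / κ := by
    subst hℓ
    -- the gradient coordinates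
    set G : (Fin p → ℝ) → Fin p → ℝ :=
      fun β j => (∑ i, ((∑ j', X i j' * β j') - y i) * X i j) / n with hGdef
    have hG : ∀ (β : Fin p → ℝ) (j : Fin p),
        fderiv ℝ (fun β : Fin p → ℝ => (∑ i, (y i - ∑ j, X i j * β j) ^ 2) / (2 * n)) β
          (Pi.single j 1) = G β j := by
      intro β j
      set Li : Fin n → (Fin p → ℝ) →L[ℝ] ℝ :=
        fun i => ∑ j, X i j • (ContinuousLinearMap.proj j : (Fin p → ℝ) →L[ℝ] ℝ) with hLi
      have hLiapp : ∀ i (v : Fin p → ℝ), Li i v = ∑ j, X i j * v j := by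
        intro i v
        simp [hLi, ContinuousLinearMap.sum_apply]
      have hD : HasFDerivAt (fun β : Fin p → ℝ => (∑ i, (y i - ∑ j, X i j * β j) ^ 2) / (2 * n))
          ((1 / (2 * (n:ℝ))) • ∑ i, ((y i - Li i β) • (-Li i) + (y i - Li i β) • (-Li i))) β := by
        have h1 : ∀ i : Fin n, HasFDerivAt (fun β : Fin p → ℝ => (y i - ∑ j, X i j * β j) ^ 2)
            ((y i - Li i β) • (-Li i) + (y i - Li i β) • (-Li i)) β := by
          intro i
          have hfun : (fun β : Fin p → ℝ => (y i - ∑ j, X i j * β j) ^ 2)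
              = fun β => (y i - Li i β) * (y i - Li i β) := by
            ext b; rw [hLiapp]; ring
          rw [hfun]
          have hsub : HasFDerivAt (fun β : Fin p → ℝ => y i - Li i β) (-Li i) β := by
            have := (hasFDerivAt_const (y i) β).sub (Li i).hasFDerivAt
            rw [zero_sub] at this
            exact this
          exact hsub.mul hsub
        have hsum := HasFDerivAt.sum (fun i (_ : i ∈ Finset.univ) => h1 i)
        have hfun2 : (fun β : Fin p → ℝ => (∑ i, (y i - ∑ j, X i j * β j) ^ 2) / (2 * n))
            = fun β => (1 / (2 * (n:ℝ))) * ∑ i, (y i - ∑ j, X i j * β j) ^ 2 := by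
          ext b; rw [div_eq_mul_inv, one_div, inv_mul_eq_div, div_eq_mul_inv, mul_comm]
        rw [hfun2]
        simpa [smul_smul] using hsum.const_mul ((1:ℝ) / (2 * n))
      rw [hD.fderiv]
      have hsingle : ∀ i : Fin n, Li i (Pi.single j 1) = X i j := by
        intro i
        rw [hLiapp]
        simp [Pi.single_apply, mul_ite, Finset.sum_ite_eq']
      simp only [ContinuousLinearMap.smul_apply, ContinuousLinearMap.sum_apply,
        ContinuousLinearMap.add_apply, ContinuousLinearMap.neg_apply, hsingle]
      rcases Nat.eq_zero_or_pos n with hn | hn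
      · subst hn; simp [hGdef]
      · have hn' : (n:ℝ) ≠ 0 := Nat.cast_ne_zero.mpr hn.ne'
        rw [hGdef]
        simp only []
        rw [Finset.sum_div, smul_eq_mul, Finset.mul_sum]
        apply Finset.sum_congr rfl
        intro i _
        rw [hLiapp]
        field_simp
        ring
    -- the quadratic expansion of the loss
    have expand : ∀ β v : Fin p → ℝ,
        (∑ i, (y i - ∑ j, X i j * (β j + v j)) ^ 2) / (2 * (n:ℝ))
          = (∑ i, (y i - ∑ j, X i j * β j) ^ 2) / (2 * (n:ℝ))
            + (∑ i, ((∑ j', X i j' * β j') - y i) * (∑ j, X i j * v j)) / n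
            + (∑ i, (∑ j, X i j * v j) ^ 2) / (2 * (n:ℝ)) := by
      intro β v
      have h1 : ∀ i, (∑ j, X i j * (β j + v j))
          = (∑ j, X i j * β j) + (∑ j, X i j * v j) := by
        intro i
        rw [← Finset.sum_add_distrib]
        exact Finset.sum_congr rfl fun j _ => by ring
      have h2 : (∑ i, (y i - ∑ j, X i j * (β j + v j)) ^ 2)
          = (∑ i, (y i - ∑ j, X i j * β j) ^ 2)
            + 2 * (∑ i, ((∑ j', X i j' * β j') - y i) * (∑ j, X i j * v j))
            + (∑ i, (∑ j, X i j * v j) ^ 2) := by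
        rw [Finset.mul_sum, ← Finset.sum_add_distrib, ← Finset.sum_add_distrib]
        exact Finset.sum_congr rfl fun i _ => by rw [h1 i]; ring
      rw [h2, add_div, add_div, mul_div_mul_left _ _ (two_ne_zero)]
    -- rewriting the inner-product term via G
    have hswap : ∀ (β : Fin p → ℝ) (v : Fin p → ℝ),
        (∑ i, ((∑ j', X i j' * β j') - y i) * (∑ j, X i j * v j)) / n
          = ∑ j, G β j * v j := by
      intro β v
      rw [hGdef]
      simp only []
      have : ∀ j, (∑ i, ((∑ j', X i j' * β j') - y i) * X i j) / (n:ℝ) * v j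
          = (∑ i, ((∑ j', X i j' * β j') - y i) * X i j * v j) / n := by
        intro j; rw [div_mul_eq_mul_div, Finset.sum_mul]
      rw [Finset.sum_congr rfl fun j _ => this j, ← Finset.sum_div, Finset.sum_comm]
      congr 1
      exact Finset.sum_congr rfl fun i _ => by
        rw [Finset.mul_sum]
        exact Finset.sum_congr rfl fun j _ => by ring
    -- optimality of the oracle
    have opt : ∀ v : Fin p → ℝ, (∀ j, j ∉ S → v j = 0) →
        (∑ i, ((∑ j', X i j' * βo j') - y i) * (∑ j, X i j * v j)) / n = 0 := by
      intro v hv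
      set a : ℝ := (∑ i, ((∑ j', X i j' * βo j') - y i) * (∑ j, X i j * v j)) / n with ha
      set c : ℝ := (∑ i, (∑ j, X i j * v j) ^ 2) / (2 * (n:ℝ)) with hc
      have hc0 : 0 ≤ c := by
        rw [hc]
        exact div_nonneg (Finset.sum_nonneg fun i _ => sq_nonneg _) (by positivity)
      have ht : ∀ t : ℝ, 0 ≤ t * a + t ^ 2 * c := by
        intro t
        have hsup : ∀ j, j ∉ S → βo j + t * v j = 0 := by
          intro j hj; rw [hβo_supp j hj, hv j hj]; ring
        have hmin := hβo_min (fun j => βo j + t * v j) hsup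
        have hexp := expand βo (fun j => t * v j)
        have hX : ∀ i, (∑ j, X i j * (t * v j)) = t * (∑ j, X i j * v j) := by
          intro i; rw [Finset.mul_sum]; exact Finset.sum_congr rfl fun j _ => by ring
        simp only [hX] at hexp
        have e1 : (∑ i, ((∑ j', X i j' * βo j') - y i) * (t * (∑ j, X i j * v j))) / (n:ℝ)
            = t * a := by
          rw [ha, ← mul_div_assoc, Finset.mul_sum]
          congr 1
          exact Finset.sum_congr rfl fun i _ => by ring
        have e2 : (∑ i, (t * (∑ j, X i j * v j)) ^ 2) / (2 * (n:ℝ)) = t ^ 2 * c := by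
          rw [hc, ← mul_div_assoc, Finset.mul_sum]
          congr 1
          exact Finset.sum_congr rfl fun i _ => by ring
        rw [e1, e2] at hexp
        simp only [] at hmin
        linarith [hmin.trans_eq hexp]
      have h2 := ht (-a / (2 * c + 2))
      have hd : (0:ℝ) < 2 * c + 2 := by linarith
      have hd' : (2 * c + 2) ≠ 0 := ne_of_gt hd
      rw [div_pow] at h2
      have h3 : 0 ≤ (-a / (2 * c + 2) * a + (-a) ^ 2 / (2 * c + 2) ^ 2 * c) * (2 * c + 2) ^ 2 :=
        mul_nonneg h2 (by positivity)
      have h4 : (-a / (2 * c + 2) * a + (-a) ^ 2 / (2 * c + 2) ^ 2 * c) * (2 * c + 2) ^ 2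
          = -(a ^ 2) * (2 * c + 2) + a ^ 2 * c := by
        field_simp
      rw [h4] at h3
      nlinarith [sq_nonneg a]
    -- β' k j = κ soft(z' k j) for all k
    have hβall : ∀ k, ∀ j ∈ S, β' k j = κ * soft (z' k j) := by
      intro k j hj
      cases k with
      | zero => rw [hβ'0, hz'0, soft_zero]; ring
      | succ m => exact hβ'step m j hj
    have hGz : ∀ k, ∀ j ∈ S, G (β' k) j = (z' k j - z' (k + 1) j) / δ := by
      intro k j hj
      have h := hz'step k j hj
      rw [hG] at h
      rw [h]
      field_simp
      ring
    have h2κδ : κ * δ * Lam < 2 := by nlinarith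
    -- descent
    have hdesc : 1 ≤ n → ∀ k,
        (∑ i, (y i - ∑ j, X i j * β' (k + 1) j) ^ 2) / (2 * (n:ℝ))
          ≤ (∑ i, (y i - ∑ j, X i j * β' k j) ^ 2) / (2 * (n:ℝ)) := by
      intro hn1 k
      have hn1' : (1:ℝ) ≤ n := by exact_mod_cast hn1
      have h2n : (0:ℝ) < 2 * n := by linarith
      set Δ : Fin p → ℝ := fun j => β' (k + 1) j - β' k j with hΔ
      have hΔsupp : ∀ j, j ∉ S → Δ j = 0 := by
        intro j hj
        rw [hΔ]
        simp [(hsupp (k + 1) j hj).2, (hsupp k j hj).2]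
      have hβeq : ∀ j, β' k j + Δ j = β' (k + 1) j := by
        intro j; rw [hΔ]; ring
      have hexp := expand (β' k) Δ
      simp only [hβeq] at hexp
      rw [hswap (β' k) Δ] at hexp
      have hsumS : (∑ j, G (β' k) j * Δ j) = ∑ j ∈ S, G (β' k) j * Δ j :=
        (Finset.sum_subset (Finset.subset_univ S)
          (fun j _ hj => by rw [hΔsupp j hj, mul_zero])).symm
      have hterm : ∀ j ∈ S, G (β' k) j * Δ j ≤ -(1 / (δ * κ)) * Δ j ^ 2 := by
        intro j hj
        have hβk := hβall k j hj
        have hβk1 := hβall (k + 1) j hj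
        have hfirm := soft_firm (z' (k + 1) j) (z' k j)
        have hΔj : Δ j = κ * (soft (z' (k + 1) j) - soft (z' k j)) := by
          rw [hΔ]
          simp only []
          rw [hβk1, hβk]
          ring
        rw [hGz k j hj, hΔj, div_mul_eq_mul_div, div_le_iff₀ hδ]
        have hR : -(1 / (δ * κ)) * (κ * (soft (z' (k + 1) j) - soft (z' k j))) ^ 2 * δ
            = -(κ * (soft (z' (k + 1) j) - soft (z' k j)) ^ 2) := by
          field_simp
        rw [hR]
        nlinarith [mul_le_mul_of_nonneg_left hfirm hκ.le]
      have hmid : (∑ j ∈ S, G (β' k) j * Δ j) ≤ -(1 / (δ * κ)) * ∑ j ∈ S, Δ j ^ 2 := by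
        rw [Finset.mul_sum]
        exact Finset.sum_le_sum hterm
      have hΔfull : ∑ j, Δ j ^ 2 = ∑ j ∈ S, Δ j ^ 2 :=
        (Finset.sum_subset (Finset.subset_univ S)
          (fun j _ hj => by rw [hΔsupp j hj]; ring)).symm
      have hXΔ := hupper Δ hΔsupp
      rw [hΔfull] at hXΔ
      have hT0 : 0 ≤ ∑ j ∈ S, Δ j ^ 2 :=
        Finset.sum_nonneg fun j _ => sq_nonneg _
      have hq : (∑ i, (∑ j, X i j * Δ j) ^ 2) / (2 * (n:ℝ))
          ≤ Lam / (2 * (n:ℝ)) * ∑ j ∈ S, Δ j ^ 2 := by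
        rw [div_mul_eq_mul_div]
        gcongr
      have hΛ : Lam / (2 * (n:ℝ)) ≤ 1 / (δ * κ) := by
        rw [div_le_div_iff₀ h2n (mul_pos hδ hκ)]
        have e : Lam * (δ * κ) = κ * δ * Lam := by ring
        rw [e]
        have e2 : (2:ℝ) ≤ 2 * n := by linarith only [hn1']
        linarith only [h2κδ, e2]
      have hfin : Lam / (2 * (n:ℝ)) * (∑ j ∈ S, Δ j ^ 2)
          ≤ 1 / (δ * κ) * (∑ j ∈ S, Δ j ^ 2) :=
        mul_le_mul_of_nonneg_right hΛ hT0
      rw [hexp, hsumS]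
      linarith only [hmid, hq, hfin]
    -- monotonicity
    have hmono : 1 ≤ n → ∀ K : ℕ,
        (∑ i, (y i - ∑ j, X i j * β' K j) ^ 2) / (2 * (n:ℝ))
          ≤ (∑ i, (y i - ∑ j, X i j * β' 0 j) ^ 2) / (2 * (n:ℝ)) := by
      intro hn1 K
      induction K with
      | zero => exact le_refl _
      | succ k ih => exact (hdesc hn1 k).trans ih
    -- main bound
    intro K hK j hj
    -- n ≥ 1
    have hn1 : 1 ≤ n := by
      by_contra hn
      have hn0 : n = 0 := by omega
      subst hn0
      have hv : ∀ j', j' ∉ S → (fun j'' => if j'' = j then (1:ℝ) else 0) j' = 0 := by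
        intro j' hj'
        simp only []
        rw [if_neg]
        intro h; exact hj' (h ▸ hj)
      have := hlower _ hv
      simp only [Finset.univ_eq_empty, Finset.sum_empty] at this
      have hone : (∑ j', (if j' = j then (1:ℝ) else 0) ^ 2) = 1 := by
        simp [apply_ite (fun x : ℝ => x ^ 2), Finset.sum_ite_eq']
      rw [hone] at this
      linarith
    have hn1' : (1:ℝ) ≤ n := by exact_mod_cast hn1
    have hn0 : ((n:ℝ)) ≠ 0 := by linarith
    have h2n : (0:ℝ) < 2 * n := by linarith
    -- the error vector
    set d : Fin p → ℝ := fun j' => β' K j' - βo j' with hd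
    have hdsupp : ∀ j', j' ∉ S → d j' = 0 := by
      intro j' hj'
      rw [hd]
      simp [(hsupp K j' hj').2, hβo_supp j' hj']
    have hdeq : ∀ j', βo j' + d j' = β' K j' := by
      intro j'; rw [hd]; ring
    have hexpd := expand βo d
    simp only [hdeq] at hexpd
    rw [opt d hdsupp] at hexpd
    -- ℓ(0) - ℓ(βo)
    have hnegsupp : ∀ j', j' ∉ S → (fun j'' => -βo j'') j' = 0 := by
      intro j' hj'; simp [hβo_supp j' hj']
    have hexp0 := expand βo (fun j' => -βo j')
    rw [opt _ hnegsupp] at hexp0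
    have hzero1 : ∀ i, (∑ j', X i j' * (βo j' + -βo j')) = 0 := by
      intro i
      apply Finset.sum_eq_zero
      intro j' _
      ring_nf
    have hzero2 : ∀ i, (∑ j', X i j' * (-βo j')) ^ 2 = (∑ j', X i j' * βo j') ^ 2 := by
      intro i
      have : (∑ j', X i j' * (-βo j')) = -(∑ j', X i j' * βo j') := by
        rw [← Finset.sum_neg_distrib]
        exact Finset.sum_congr rfl fun j' _ => by ring
      rw [this]
      ring
    simp only [hzero1, hzero2] at hexp0
    -- hexp0 : (∑ i, (y i - 0)^2)/(2n) = ℓβo + 0 + (∑ Xβo²)/(2n)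
    have hβ'0fun : ∀ i, (∑ j', X i j' * β' 0 j') = 0 := by
      intro i
      apply Finset.sum_eq_zero
      intro j' _
      rw [hβ'0]; ring
    have hmonoK := hmono hn1 K
    simp only [hβ'0fun] at hmonoK
    -- chain: lam * ∑ d² ≤ Lam * ∑ βo²
    have hlow := hlower d hdsupp
    have hup := hupper βo hβo_supp
    have hXd : (∑ i, (∑ j', X i j' * d j') ^ 2)
        = 2 * (n:ℝ) * ((∑ i, (y i - ∑ j', X i j' * β' K j') ^ 2) / (2 * (n:ℝ))
            - (∑ i, (y i - ∑ j', X i j' * βo j') ^ 2) / (2 * (n:ℝ))) := by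
      rw [hexpd]
      field_simp
      ring
    have hXβo : (∑ i, (∑ j', X i j' * βo j') ^ 2)
        = 2 * (n:ℝ) * ((∑ i, (y i - 0) ^ 2) / (2 * (n:ℝ))
            - (∑ i, (y i - ∑ j', X i j' * βo j') ^ 2) / (2 * (n:ℝ))) := by
      rw [hexp0]
      field_simp
      ring
    have hchain : lam * ∑ j', d j' ^ 2 ≤ Lam * ∑ j', βo j' ^ 2 := by
      calc lam * ∑ j', d j' ^ 2 ≤ ∑ i, (∑ j', X i j' * d j') ^ 2 := hlow
      _ = 2 * (n:ℝ) * ((∑ i, (y i - ∑ j', X i j' * β' K j') ^ 2) / (2 * (n:ℝ))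
            - (∑ i, (y i - ∑ j', X i j' * βo j') ^ 2) / (2 * (n:ℝ))) := hXd
      _ ≤ 2 * (n:ℝ) * ((∑ i, (y i - 0) ^ 2) / (2 * (n:ℝ))
            - (∑ i, (y i - ∑ j', X i j' * βo j') ^ 2) / (2 * (n:ℝ))) := by
          apply mul_le_mul_of_nonneg_left _ (le_of_lt h2n)
          linarith
      _ = ∑ i, (∑ j', X i j' * βo j') ^ 2 := hXβo.symm
      _ ≤ Lam * ∑ j', βo j' ^ 2 := hup
    -- restrict βo sum to S
    have hβoS : ∑ j', βo j' ^ 2 = ∑ j' ∈ S, βo j' ^ 2 :=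
      (Finset.sum_subset (Finset.subset_univ S)
        (fun j' _ hj' => by rw [hβo_supp j' hj']; ring)).symm
    set B : ℝ := Real.sqrt (∑ j' ∈ S, βo j' ^ 2) with hB
    have hB0 : 0 ≤ B := Real.sqrt_nonneg _
    have hβoB : ∑ j', βo j' ^ 2 = B ^ 2 := by
      rw [hβoS, hB, Real.sq_sqrt]
      exact Finset.sum_nonneg fun j' _ => sq_nonneg _
    -- |d j| ≤ sqrt(Lam/lam) * B
    have hdj : |d j| ≤ Real.sqrt (Lam / lam) * B := by
      have h1 : d j ^ 2 ≤ ∑ j', d j' ^ 2 :=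
        Finset.single_le_sum (fun j' _ => sq_nonneg (d j')) (Finset.mem_univ j)
      have h2 : ∑ j', d j' ^ 2 ≤ Lam / lam * B ^ 2 := by
        rw [div_mul_eq_mul_div, le_div_iff₀ hlam]
        nlinarith [hchain, hβoB]
      have h3 : |d j| = Real.sqrt (d j ^ 2) := (Real.sqrt_sq_eq_abs _).symm
      rw [h3]
      calc Real.sqrt (d j ^ 2) ≤ Real.sqrt (Lam / lam * B ^ 2) :=
            Real.sqrt_le_sqrt (h1.trans h2)
      _ = Real.sqrt (Lam / lam) * B := by
          rw [Real.sqrt_mul (by positivity), Real.sqrt_sq hB0]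
    have hβoj : |βo j| ≤ B := by
      have h1 : βo j ^ 2 ≤ B ^ 2 := by
        rw [← hβoB]
        exact Finset.single_le_sum (fun j' _ => sq_nonneg (βo j')) (Finset.mem_univ j)
      have h3 : |βo j| = Real.sqrt (βo j ^ 2) := (Real.sqrt_sq_eq_abs _).symm
      rw [h3]
      calc Real.sqrt (βo j ^ 2) ≤ Real.sqrt (B ^ 2) := Real.sqrt_le_sqrt h1
      _ = B := Real.sqrt_sq hB0
    have hβKj : |β' K j| ≤ (Real.sqrt (Lam / lam) + 1) * B := by
      have : β' K j = d j + βo j := by rw [hd]; ring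
      rw [this]
      calc |d j + βo j| ≤ |d j| + |βo j| := abs_add_le _ _
      _ ≤ Real.sqrt (Lam / lam) * B + B := add_le_add hdj hβoj
      _ = (Real.sqrt (Lam / lam) + 1) * B := by ring
    -- conclude
    obtain ⟨m, rfl⟩ : ∃ m, K = m + 1 := ⟨K - 1, by omega⟩
    have hsoft : soft (z' (m + 1) j) = β' (m + 1) j / κ := by
      rw [hβ'step m j hj]
      field_simp
    calc |z' (m + 1) j|
        ≤ |z' (m + 1) j - soft (z' (m + 1) j)| + |soft (z' (m + 1) j)| := by
          have : z' (m + 1) j = (z' (m + 1) j - soft (z' (m + 1) j)) + soft (z' (m + 1) j) := by ring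
          nth_rewrite 1 [this]
          exact abs_add_le _ _
      _ ≤ 1 + |β' (m + 1) j| / κ := by
          apply add_le_add (abs_sub_soft _)
          rw [hsoft, abs_div, abs_of_pos hκ]
      _ ≤ 1 + (Real.sqrt (Lam / lam) + 1) * B / κ := by
          have hdiv : |β' (m + 1) j| / κ ≤ (Real.sqrt (Lam / lam) + 1) * B / κ := by
            gcongr
          linarith

  refine ⟨part1, ?_⟩
  intro η hη0 hη1 hrow hκbig
  set A : Matrix {j : Fin p // j ∉ S} {j : Fin p // j ∈ S} ℝ :=
    (Matrix.of fun (a : {j : Fin p // j ∉ S}) (b : {j : Fin p // j ∈ S}) =>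
        ∑ i, X i a.1 * X i b.1) *
      (Matrix.of fun (a b : {j : Fin p // j ∈ S}) =>
        ∑ i, X i a.1 * X i b.1)⁻¹ with hA
  set B' : ℝ := 1 + (Real.sqrt (Lam / lam) + 1) * Real.sqrt (∑ j ∈ S, βo j ^ 2) / κ
    with hB'
  have hB'0 : (0:ℝ) ≤ B' := by
    have h1 : 0 ≤ (Real.sqrt (Lam / lam) + 1) * Real.sqrt (∑ j ∈ S, βo j ^ 2) / κ :=
      div_nonneg (mul_nonneg (by positivity) (Real.sqrt_nonneg _)) hκ.le
    rw [hB']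
    linarith
  have h1η : (0:ℝ) < 1 - η := by linarith
  refine ⟨(1 - η) * B', ?_, ?_⟩
  · calc (1 - η) * B' < (1 - η) * ((1 - η / 2) / (1 - η)) :=
        mul_lt_mul_of_pos_left hκbig h1η
    _ = 1 - η / 2 := by
        rw [mul_comm, div_mul_cancel₀ _ (ne_of_gt h1η)]
  · intro K hK jc
    calc |∑ l : {j : Fin p // j ∈ S}, A jc l * z' K l.1|
        ≤ ∑ l : {j : Fin p // j ∈ S}, |A jc l * z' K l.1| :=
          Finset.abs_sum_le_sum_abs _ _
    _ = ∑ l : {j : Fin p // j ∈ S}, |A jc l| * |z' K l.1| :=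
          Finset.sum_congr rfl fun l _ => abs_mul _ _
    _ ≤ ∑ l : {j : Fin p // j ∈ S}, |A jc l| * B' :=
          Finset.sum_le_sum fun l _ =>
            mul_le_mul_of_nonneg_left (part1 K hK l.1 l.2) (abs_nonneg _)
    _ = (∑ l : {j : Fin p // j ∈ S}, |A jc l|) * B' := (Finset.sum_mul _ _ _).symm
    _ ≤ (1 - η) * B' := mul_le_mul_of_nonneg_right (hrow jc) hB'0
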